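/- There exists an unsatisfiable pure 3CNF formula φ (namely (x∨y)∧(y∨z)∧(v∨x)∧(¬x∨¬z)∧(¬v∨¬y)∧(¬x∨¬y) with n=4 variables and m=6 clauses) and a 12-state DFA over {a,b} that is consistent with the sample sets P = {ε, b, a^12, a^11 b} ∪ {a^i b b b : 1≤i≤6} ∪ {a^i b b : 1≤i≤3} ∪ {a^i b b a : 4≤i≤6} and N = {a^j : 1≤j≤11} ∪ {a^i b, a^i b a : 1≤i≤6} ∪ {a^i b b : 4≤i≤6} (accepting everything in P and rejecting everything in N). -/
import Mathlib

def myDFA : DFA Bool (Fin 12) where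
  step := fun s c =>
    if c = false then s + 1
    else match s with
      | 0 => 0 | 1 => 7 | 2 => 7 | 3 => 7
      | 4 => 8 | 5 => 8 | 6 => 8 | 7 => 0
      | 8 => 11 | 9 => 0 | 10 => 0 | 11 => 0
  start := 0
  accept := {0}

lemma mem_iff (x : List Bool) : x ∈ myDFA.accepts ↔ myDFA.eval x = 0 := by
  show myDFA.eval x ∈ ({0} : Set (Fin 12)) ↔ _
  simp

/-- Letter `a` is `false`, letter `b` is `true`. The pure CNF formula
`(x∨y)∧(y∨z)∧(v∨x)∧(¬x∨¬z)∧(¬v∨¬y)∧(¬x∨¬y)` is unsatisfiable, yet there is a 12-state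
DFA over `{a,b}` consistent with the sample sets `P` and `N` of the
Fernau–Heggernes–Villanger construction applied to it. -/
theorem unsat_formula_with_consistent_twelve_state_dfa :
    (¬ ∃ v x y z : Bool,
      ((x || y) && (y || z) && (v || x) && (!x || !z) && (!v || !y) && (!x || !y)) = true) ∧
    (∃ (σ : Type) (_ : Fintype σ) (A : DFA Bool σ),
      Fintype.card σ = 12 ∧
      [] ∈ A.accepts ∧
      [true] ∈ A.accepts ∧
      List.replicate 12 false ∈ A.accepts ∧
      (List.replicate 11 false ++ [true]) ∈ A.accepts ∧
      (∀ i, 1 ≤ i → i ≤ 6 →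
        List.replicate i false ++ [true, true, true] ∈ A.accepts) ∧
      (∀ i, 1 ≤ i → i ≤ 3 →
        List.replicate i false ++ [true, true] ∈ A.accepts) ∧
      (∀ i, 4 ≤ i → i ≤ 6 →
        List.replicate i false ++ [true, true, false] ∈ A.accepts) ∧
      (∀ j, 1 ≤ j → j ≤ 11 → List.replicate j false ∉ A.accepts) ∧
      (∀ i, 1 ≤ i → i ≤ 6 →
        List.replicate i false ++ [true] ∉ A.accepts ∧
        List.replicate i false ++ [true, false] ∉ A.accepts) ∧
      (∀ i, 4 ≤ i → i ≤ 6 →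
        List.replicate i false ++ [true, true] ∉ A.accepts)) := by
  constructor
  · decide
  · refine ⟨Fin 12, inferInstance, myDFA, rfl, ?_, ?_, ?_, ?_, ?_, ?_, ?_, ?_, ?_, ?_⟩
    · rw [mem_iff]; decide
    · rw [mem_iff]; decide
    · rw [mem_iff]; decide
    · rw [mem_iff]; decide
    · intro i h1 h2; interval_cases i <;> (rw [mem_iff]; decide)
    · intro i h1 h2; interval_cases i <;> (rw [mem_iff]; decide)
    · intro i h1 h2; interval_cases i <;> (rw [mem_iff]; decide)
    · intro j h1 h2; interval_cases j <;> (rw [mem_iff]; decide)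
    · intro i h1 h2; interval_cases i <;>
        exact ⟨by rw [mem_iff]; decide, by rw [mem_iff]; decide⟩
    · intro i h1 h2; interval_cases i <;> (rw [mem_iff]; decide)
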